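/- Let G be a graph, B a zero forcing set of G, and F a set of forces of B. Then for each t ≥ 0, Q_t(F) ⊆ ⋃_{i=0}^{t} Rev(F)^(i), where Q_0(F)=Term(F) and for t ≥ 1, Q_t(F) is the set of vertices that perform a force in F at time pt(G,F)−t+1. -/

import Mathlib

open SimpleGraph

variable {V : Type*}

/-- One simultaneous round of the color change rule: all currently forceable
vertices become black. -/
def forceStep (G : SimpleGraph V) (S : Set V) : Set V :=
  S ∪ {w | ∃ v ∈ S, G.Adj v w ∧ ∀ u, G.Adj v u → u ∉ S → u = w}

/-- The (cumulative) set of black vertices after `t` simultaneous rounds,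
starting from `B`; so `B^{(t)} = propSet G B t \ propSet G B (t-1)`. -/
def propSet (G : SimpleGraph V) (B : Set V) : ℕ → Set V
  | 0 => B
  | t + 1 => forceStep G (propSet G B t)

/-- `B` is a zero forcing set of `G`. -/
def IsZFSet (G : SimpleGraph V) (B : Set V) : Prop := ∃ t, propSet G B t = Set.univ

/-- The zero forcing number `Z(G)`. -/
noncomputable def zfNum (G : SimpleGraph V) : ℕ :=
  sInf {n | ∃ B : Set V, IsZFSet G B ∧ B.ncard = n}

/-- `B` is a minimum zero forcing set of `G`. -/
def IsMinZFSet (G : SimpleGraph V) (B : Set V) : Prop := IsZFSet G B ∧ B.ncard = zfNum G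

/-- The propagation time `pt(G,B)` of a zero forcing set `B`. -/
noncomputable def ptSet (G : SimpleGraph V) (B : Set V) : ℕ :=
  sInf {t | propSet G B t = Set.univ}

/-- The minimum propagation time `pt(G)`. -/
noncomputable def ptMin (G : SimpleGraph V) : ℕ :=
  sInf (ptSet G '' {B | IsMinZFSet G B})

/-- The maximum propagation time `PT(G)`. -/
noncomputable def ptMax (G : SimpleGraph V) : ℕ :=
  sSup (ptSet G '' {B | IsMinZFSet G B})

/-- `IsChronList G S L` : starting from black set `S`, the list `L` is a valid
chronological list of forces, performed one at a time, ending with all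
vertices black. -/
def IsChronList (G : SimpleGraph V) : Set V → List (V × V) → Prop
  | S, [] => S = Set.univ
  | S, (v, w) :: L =>
      v ∈ S ∧ w ∉ S ∧ G.Adj v w ∧ (∀ u, G.Adj v u → u ∉ S → u = w) ∧
        IsChronList G (insert w S) L

/-- `F` is a set of forces of `B`: the unordered set of forces of some
chronological list of forces of `B`. -/
def IsForceSet (G : SimpleGraph V) (B : Set V) (F : Set (V × V)) : Prop :=
  ∃ L : List (V × V), IsChronList G B L ∧ {p | p ∈ L} = F

/-- The terminus of a set of forces: the vertices performing no force. -/
def termSet (F : Set (V × V)) : Set V := {v | ∀ w, (v, w) ∉ F}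

/-- The reverse set of forces. -/
def revSet (F : Set (V × V)) : Set (V × V) := (fun p : V × V => (p.2, p.1)) '' F

/-- The (cumulative) set of black vertices after `t` rounds when propagating
using only the forces in `F`, starting from `B`;
so `F^{(t)} = fpropSet G B F t \ fpropSet G B F (t-1)`. -/
def fpropSet (G : SimpleGraph V) (B : Set V) (F : Set (V × V)) : ℕ → Set V
  | 0 => B
  | t + 1 => fpropSet G B F t ∪
      {w | ∃ v, (v, w) ∈ F ∧ v ∈ fpropSet G B F t ∧ w ∉ fpropSet G B F t ∧
        ∀ u, G.Adj v u → u ∉ fpropSet G B F t → u = w}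

/-- The propagation time `pt(G,F)` of a set of forces `F` of `B`. -/
noncomputable def ptForces (G : SimpleGraph V) (B : Set V) (F : Set (V × V)) : ℕ :=
  sInf {t | fpropSet G B F t = Set.univ}

/-- `B` is an efficient zero forcing set of `G`. -/
def IsEffZFSet (G : SimpleGraph V) (B : Set V) : Prop :=
  IsMinZFSet G B ∧ ptSet G B = ptMin G

/-- `F` is an efficient set of forces of the minimum zero forcing set `B`. -/
def IsEffForces (G : SimpleGraph V) (B : Set V) (F : Set (V × V)) : Prop :=
  IsMinZFSet G B ∧ IsForceSet G B F ∧ ptForces G B F = ptMin G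


lemma fprop_mono {G : SimpleGraph V} {B : Set V} {F : Set (V × V)} :
    Monotone (fpropSet G B F) := by
  apply monotone_nat_of_le_succ
  intro n
  exact Set.subset_union_left

lemma chron_target_not_mem {G : SimpleGraph V} :
    ∀ {S : Set V} {L : List (V × V)}, IsChronList G S L → ∀ p ∈ L, p.2 ∉ S := by
  intro S L
  induction L generalizing S with
  | nil => intro _ p hp; simp at hp
  | cons a L ih =>
    obtain ⟨v, w⟩ := a
    intro h p hp
    obtain ⟨hv, hw, hadj, huniq, hrest⟩ := h
    rcases List.mem_cons.mp hp with h | h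
    · subst h; exact hw
    · intro hpS
      exact ih hrest p h (Set.mem_insert_iff.mpr (Or.inr hpS))

lemma chron_forcer_unique {G : SimpleGraph V} :
    ∀ {S : Set V} {L : List (V × V)}, IsChronList G S L →
      ∀ v₁ v₂ w, (v₁, w) ∈ L → (v₂, w) ∈ L → v₁ = v₂ := by
  intro S L
  induction L generalizing S with
  | nil => intro _ v₁ v₂ w h1; simp at h1
  | cons a L ih =>
    obtain ⟨v, w₀⟩ := a
    intro h v₁ v₂ w h1 h2
    obtain ⟨hv, hw, hadj, huniq, hrest⟩ := h
    rcases List.mem_cons.mp h1 with h1 | h1 <;> rcases List.mem_cons.mp h2 with h2 | h2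
    · rw [Prod.mk.injEq] at h1 h2
      rw [h1.1, h2.1]
    · rw [Prod.mk.injEq] at h1
      exfalso
      have := chron_target_not_mem hrest (v₂, w) h2
      rw [h1.2] at this
      exact this (Set.mem_insert _ _)
    · rw [Prod.mk.injEq] at h2
      exfalso
      have := chron_target_not_mem hrest (v₁, w) h1
      rw [h2.2] at this
      exact this (Set.mem_insert _ _)
    · exact ih hrest v₁ v₂ w h1 h2

lemma chron_fprop_univ {G : SimpleGraph V} {B : Set V} {F : Set (V × V)} :
    ∀ {S : Set V} {L : List (V × V)} {n : ℕ}, IsChronList G S L →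
      (∀ p ∈ L, p ∈ F) → S ⊆ fpropSet G B F n →
      Set.univ ⊆ fpropSet G B F (n + L.length) := by
  intro S L
  induction L generalizing S with
  | nil =>
    intro n h _ hS
    simpa [h.symm] using hS
  | cons a L ih =>
    obtain ⟨v, w⟩ := a
    intro n h hLF hS
    obtain ⟨hv, hw, hadj, huniq, hrest⟩ := h
    have hstep : insert w S ⊆ fpropSet G B F (n + 1) := by
      intro x hx
      rcases Set.mem_insert_iff.mp hx with hx | hx
      · subst hx
        by_cases hxn : x ∈ fpropSet G B F n
        · exact Or.inl hxn
        · exact Or.inr ⟨v, hLF (v, x) List.mem_cons_self, hS hv, hxn,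
            fun u hu hun => huniq u hu (fun hmem => hun (hS hmem))⟩
      · exact Or.inl (hS hx)
    have := ih hrest (fun p hp => hLF p (List.mem_cons_of_mem _ hp)) hstep
    have harith : n + 1 + L.length = n + (L.length + 1) := by omega
    rw [harith] at this
    simpa using this


/-- `Q_t(F) ⊆ ⋃_{i=0}^{t} Rev(F)^{(i)}`, where `Q_0(F) = Term(F)` and for
`t ≥ 1`, `Q_t(F)` is the set of vertices performing a force in `F` at time
`pt(G,F) - t + 1` (note `fpropSet G (termSet F) (revSet F) t` is the
cumulative union `⋃_{i=0}^{t} Rev(F)^{(i)}`). -/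
theorem Q_subset_rev_prop {V : Type*} [Finite V] (G : SimpleGraph V) (B : Set V)
    (F : Set (V × V)) (hB : IsZFSet G B) (hF : IsForceSet G B F) (t : ℕ) :
    (if t = 0 then termSet F
     else {v | ∃ w, (v, w) ∈ F ∧ w ∈ fpropSet G B F (ptForces G B F - t + 1) ∧
            w ∉ fpropSet G B F (ptForces G B F - t)})
      ⊆ fpropSet G (termSet F) (revSet F) t := by
  induction t using Nat.strong_induction_on with
  | _ t IH =>
  obtain ⟨L, hL, hLF⟩ := hF
  have hFmem : ∀ p ∈ L, p ∈ F := fun p hp => by rw [← hLF]; exact hp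
  have hFuniq : ∀ v₁ v₂ w : V, (v₁, w) ∈ F → (v₂, w) ∈ F → v₁ = v₂ := by
    intro v₁ v₂ w h1 h2
    rw [← hLF] at h1 h2
    exact chron_forcer_unique hL v₁ v₂ w h1 h2
  have hFtgt : ∀ p ∈ F, p.2 ∉ B := by
    intro p hp
    rw [← hLF] at hp
    exact chron_target_not_mem hL p hp
  rcases Nat.eq_zero_or_pos t with ht0 | ht1
  · subst ht0
    rw [if_pos rfl]
    exact fun v hv => hv
  · rw [if_neg (by omega)]
    set p := ptForces G B F with hpdef
    have hpmem : fpropSet G B F p = Set.univ := by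
      have h1 : Set.univ ⊆ fpropSet G B F (0 + L.length) :=
        chron_fprop_univ hL hFmem (fun x hx => hx)
      have h2 : (0 + L.length) ∈ {t | fpropSet G B F t = Set.univ} :=
        Set.eq_univ_of_univ_subset h1
      exact Nat.sInf_mem ⟨_, h2⟩
    -- first round at which a target x' of F becomes black
    have firstRound : ∀ x' : V, (∃ x, (x, x') ∈ F) →
        ∃ r, r + 1 ≤ p ∧ x' ∉ fpropSet G B F r ∧ x' ∈ fpropSet G B F (r + 1) ∧
          ∃ v₀, (v₀, x') ∈ F ∧ v₀ ∈ fpropSet G B F r ∧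
            ∀ u, G.Adj v₀ u → u ∉ fpropSet G B F r → u = x' := by
      intro x' ⟨x, hx⟩
      have h0 : x' ∉ fpropSet G B F 0 := hFtgt (x, x') hx
      have hup : x' ∈ fpropSet G B F p := by rw [hpmem]; exact Set.mem_univ x'
      set s := sInf {r | x' ∈ fpropSet G B F r} with hs
      have hsne : {r | x' ∈ fpropSet G B F r}.Nonempty := ⟨p, hup⟩
      have hsmem : x' ∈ fpropSet G B F s := Nat.sInf_mem hsne
      have hsp : s ≤ p := Nat.sInf_le hup
      have hs0 : s ≠ 0 := fun h => h0 (h ▸ hsmem)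
      obtain ⟨r, hr⟩ := Nat.exists_eq_succ_of_ne_zero hs0
      have hrnot : x' ∉ fpropSet G B F r := by
        intro h
        have hle : s ≤ r := Nat.sInf_le h
        omega
      have hrp : r + 1 ≤ p := by omega
      rw [hr] at hsmem
      rcases hsmem with hmem | ⟨v₀, hv₀F, hv₀mem, _, huniq⟩
      · exact absurd hmem hrnot
      · exact ⟨r, hrp, hrnot,
          Or.inr ⟨v₀, hv₀F, hv₀mem, hrnot, huniq⟩, v₀, hv₀F, hv₀mem, huniq⟩
    have inRev : ∀ x x' r, (x, x') ∈ F → x' ∉ fpropSet G B F r →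
        x' ∈ fpropSet G B F (r + 1) → r + 1 ≤ p → p - t + 1 ≤ r →
        x ∈ fpropSet G (termSet F) (revSet F) (t - 1) := by
      intro x x' r hx hr1 hr2 hrp hrt
      set t'' := p - r with ht''
      have h1 : 1 ≤ t'' := by omega
      have h2 : t'' < t := by omega
      have h3 : p - t'' + 1 = r + 1 := by omega
      have h4 : p - t'' = r := by omega
      have hIH := IH t'' h2
      rw [if_neg (by omega)] at hIH
      have hxQ : x ∈ {v | ∃ w, (v, w) ∈ F ∧ w ∈ fpropSet G B F (p - t'' + 1) ∧
          w ∉ fpropSet G B F (p - t'')} := ⟨x', hx, by rw [h3]; exact hr2, by rw [h4]; exact hr1⟩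
      exact fprop_mono (by omega : t'' ≤ t - 1) (hIH hxQ)
    intro v hv
    obtain ⟨w, hvwF, hw1, hw0⟩ := hv
    by_cases hvR : v ∈ fpropSet G (termSet F) (revSet F) (t - 1)
    · exact fprop_mono (by omega : t - 1 ≤ t) hvR
    · -- auxiliary: any vertex x adjacent-relevant with a suitable force lands in revprop (t-1)
      have hterm : ∀ x : V, x ∈ termSet F →
          x ∈ fpropSet G (termSet F) (revSet F) (t - 1) :=
        fun x hx => fprop_mono (Nat.zero_le _) hx
      have hwR : w ∈ fpropSet G (termSet F) (revSet F) (t - 1) := by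
        by_cases hwT : w ∈ termSet F
        · exact hterm w hwT
        · simp only [termSet, Set.mem_setOf_eq, not_forall, not_not] at hwT
          obtain ⟨w', hww'⟩ := hwT
          obtain ⟨r, hrp, hr1, hr2, v₀, hv₀F, hv₀mem, _⟩ := firstRound w' ⟨w, hww'⟩
          have hv₀ : v₀ = w := hFuniq v₀ w w' hv₀F hww'
          subst hv₀
          have hrt : p - t + 1 ≤ r := by
            by_contra hcon
            exact hw0 (fprop_mono (by omega : r ≤ p - t) hv₀mem)
          exact inRev v₀ w' r hww' hr1 hr2 hrp hrt
      have hstep : v ∈ fpropSet G (termSet F) (revSet F) ((t - 1) + 1) := by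
        refine Or.inr ⟨w, ⟨(v, w), hvwF, rfl⟩, hwR, hvR, ?_⟩
        intro u hadj huR
        by_contra huv
        apply huR
        by_cases huT : u ∈ termSet F
        · exact hterm u huT
        · simp only [termSet, Set.mem_setOf_eq, not_forall, not_not] at huT
          obtain ⟨u', huu'⟩ := huT
          obtain ⟨r, hrp, hr1, hr2, v₀, hv₀F, hv₀mem, huniq⟩ := firstRound u' ⟨u, huu'⟩
          have hv₀ : v₀ = u := hFuniq v₀ u u' hv₀F huu'
          subst hv₀
          have hwu' : w ≠ u' := by
            intro h
            subst h
            exact huv (hFuniq v₀ v w huu' hvwF)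
          have hwmem : w ∈ fpropSet G B F r := by
            by_contra hwm
            exact hwu' (huniq w hadj.symm hwm)
          have hrt : p - t + 1 ≤ r := by
            by_contra hcon
            exact hw0 (fprop_mono (by omega : r ≤ p - t) hwmem)
          exact inRev v₀ u' r huu' hr1 hr2 hrp hrt
      have harith : t - 1 + 1 = t := by omega
      rwa [harith] at hstep
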